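/- Let m ≥ 3 be odd and p ≥ 2m. Define Q_m(z₁,…,z_m) = z₃⋯z_m(z₁² - z₂² + c z₁z₂) for real c ≥ 0. Then ‖Q_m‖ ≤ ‖Q_{m-1}‖ ≤ 2^(-(m-3)/p)(4 + c²)^(1/2), where norms are sup norms over the respective ℓ_p unit balls. -/

import Mathlib

lemma sq_norm_complex (z : ℂ) : ‖z‖ ^ 2 = z.re ^ 2 + z.im ^ 2 := by
  rw [Complex.sq_norm, Complex.normSq_apply]; ring

lemma quad_bound (c : ℝ) (z₀ z₁ : ℂ) :
    ‖z₀ ^ 2 - z₁ ^ 2 + (c : ℂ) * z₀ * z₁‖ ≤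
      Real.sqrt (4 + c ^ 2) * ((‖z₀‖ ^ 2 + ‖z₁‖ ^ 2) / 2) := by
  set w := z₀ ^ 2 - z₁ ^ 2 + (c : ℂ) * z₀ * z₁ with hw
  have h2 : ‖w‖ ^ 2 ≤ (4 + c ^ 2) * (((‖z₀‖ ^ 2 + ‖z₁‖ ^ 2) / 2) ^ 2) := by
    rw [sq_norm_complex w, sq_norm_complex z₀, sq_norm_complex z₁]
    have hre : w.re = z₀.re ^ 2 - z₀.im ^ 2 - (z₁.re ^ 2 - z₁.im ^ 2)
        + c * (z₀.re * z₁.re - z₀.im * z₁.im) := by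
      simp [hw, pow_two, Complex.mul_re, Complex.mul_im]; ring
    have him : w.im = 2 * z₀.re * z₀.im - 2 * z₁.re * z₁.im
        + c * (z₀.re * z₁.im + z₀.im * z₁.re) := by
      simp [hw, pow_two, Complex.mul_re, Complex.mul_im]; ring
    rw [hre, him]
    nlinarith [sq_nonneg (c * ((z₀.re ^ 2 + z₀.im ^ 2) - (z₁.re ^ 2 + z₁.im ^ 2))
      - 4 * (z₀.re * z₁.re + z₀.im * z₁.im))]
  have hM : (0 : ℝ) ≤ (‖z₀‖ ^ 2 + ‖z₁‖ ^ 2) / 2 := by positivity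
  calc ‖w‖ = Real.sqrt (‖w‖ ^ 2) := by rw [Real.sqrt_sq (norm_nonneg w)]
    _ ≤ Real.sqrt ((4 + c ^ 2) * (((‖z₀‖ ^ 2 + ‖z₁‖ ^ 2) / 2) ^ 2)) := Real.sqrt_le_sqrt h2
    _ = Real.sqrt (4 + c ^ 2) * ((‖z₀‖ ^ 2 + ‖z₁‖ ^ 2) / 2) := by
        rw [Real.sqrt_mul (by positivity), Real.sqrt_sq hM]


lemma core (k : ℕ) (hk : 2 ≤ k) (p : ℝ) (hp : 2 ≤ p) (a : Fin k → ℝ)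
    (ha : ∀ i, 0 ≤ a i) (hsum : ∑ i, a i ^ p ≤ 1) :
    (∏ i ∈ Finset.univ.filter (fun i : Fin k => 2 ≤ (i : ℕ)), a i) *
      ((a ⟨0, by omega⟩ ^ 2 + a ⟨1, by omega⟩ ^ 2) / 2) ≤ (2 : ℝ) ^ (-((k : ℝ) - 2) / p) := by
  have hp0 : 0 < p := by linarith
  have hk0 : 0 < (k : ℝ) := by positivity
  set i0 : Fin k := ⟨0, by omega⟩
  set i1 : Fin k := ⟨1, by omega⟩
  set t : Fin k → ℝ := fun i => a i ^ p with ht_def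
  have ht : ∀ i, 0 ≤ t i := fun i => Real.rpow_nonneg (ha i) p
  set s : ℝ := (t i0 + t i1) / 2 with hs_def
  have hs0 : 0 ≤ s := div_nonneg (add_nonneg (ht i0) (ht i1)) (by norm_num)
  set u : Fin k → ℝ := fun i => if (i : ℕ) < 2 then s else t i with hu_def
  have hu : ∀ i, 0 ≤ u i := by intro i; by_cases h : (i : ℕ) < 2 <;> simp only [hu_def, h, ↓reduceIte, hs0, ht i]
  have hfilter : Finset.univ.filter (fun i : Fin k => ¬ 2 ≤ (i : ℕ)) = {i0, i1} := by
    ext i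
    simp only [Finset.mem_filter, Finset.mem_univ, true_and, Finset.mem_insert,
      Finset.mem_singleton, Fin.ext_iff, not_le, i0, i1]
    omega
  -- sum of u equals sum of t
  have hsum_u : ∑ i, u i = ∑ i, t i := by
    rw [← Finset.sum_filter_add_sum_filter_not Finset.univ (fun i : Fin k => 2 ≤ (i : ℕ)) u,
      ← Finset.sum_filter_add_sum_filter_not Finset.univ (fun i : Fin k => 2 ≤ (i : ℕ)) t,
      hfilter]
    have h1 : ∀ i ∈ Finset.univ.filter (fun i : Fin k => 2 ≤ (i : ℕ)), u i = t i := by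
      intro i hi
      simp only [Finset.mem_filter] at hi
      simp only [hu_def, Nat.not_lt.mpr hi.2, ↓reduceIte]
    rw [Finset.sum_congr rfl h1]
    have hne : i0 ≠ i1 := by simp [Fin.ext_iff, i0, i1]
    rw [Finset.sum_pair hne, Finset.sum_pair hne]
    have : u i0 = s := by simp [hu_def, i0]
    have h2 : u i1 = s := by simp [hu_def, i1]
    rw [this, h2, hs_def]
    ring
  -- product of u
  have hprod_u : ∏ i, u i = (∏ i ∈ Finset.univ.filter (fun i : Fin k => 2 ≤ (i : ℕ)), t i) * s ^ 2 := by
    rw [← Finset.prod_filter_mul_prod_filter_not Finset.univ (fun i : Fin k => 2 ≤ (i : ℕ)) u,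
      hfilter]
    have h1 : ∀ i ∈ Finset.univ.filter (fun i : Fin k => 2 ≤ (i : ℕ)), u i = t i := by
      intro i hi
      simp only [Finset.mem_filter] at hi
      simp only [hu_def, Nat.not_lt.mpr hi.2, ↓reduceIte]
    rw [Finset.prod_congr rfl h1]
    have hne : i0 ≠ i1 := by simp [Fin.ext_iff, i0, i1]
    rw [Finset.prod_pair hne]
    have h3 : u i0 = s := by simp [hu_def, i0]
    have h4 : u i1 = s := by simp [hu_def, i1]
    rw [h3, h4]
    ring
  -- AM-GM
  have hkne : (k : ℝ) ≠ 0 := ne_of_gt hk0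
  have hamgm : ∏ i, u i ≤ (1 / (k : ℝ)) ^ k := by
    have h := Real.geom_mean_le_arith_mean_weighted Finset.univ (fun _ => 1 / (k : ℝ)) u
      (fun i _ => by positivity)
      (by simp [Finset.sum_const, Finset.card_univ]; field_simp)
      (fun i _ => hu i)
    beta_reduce at h
    rw [Real.finset_prod_rpow Finset.univ u (fun i _ => hu i) (1 / (k : ℝ))] at h
    have hsum1 : ∑ i, (1 / (k : ℝ)) * u i ≤ 1 / (k : ℝ) := by
      rw [← Finset.mul_sum, hsum_u]
      have : ∑ i, t i ≤ 1 := hsum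
      calc (1 / (k : ℝ)) * ∑ i, t i ≤ (1 / (k : ℝ)) * 1 :=
            mul_le_mul_of_nonneg_left this (by positivity)
        _ = 1 / (k : ℝ) := mul_one _
    have h2 : (∏ i, u i) ^ (1 / (k : ℝ)) ≤ 1 / (k : ℝ) := le_trans h hsum1
    have hprod0 : 0 ≤ ∏ i, u i := Finset.prod_nonneg (fun i _ => hu i)
    have h3 : ((∏ i, u i) ^ (1 / (k : ℝ))) ^ k ≤ (1 / (k : ℝ)) ^ k :=
      pow_le_pow_left₀ (Real.rpow_nonneg hprod0 _) h2 k
    rwa [← Real.rpow_natCast ((∏ i, u i) ^ (1 / (k : ℝ))) k, ← Real.rpow_mul hprod0,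
      one_div_mul_cancel hkne, Real.rpow_one] at h3
  -- power mean
  have hq : (1:ℝ) ≤ p / 2 := by linarith
  have hA : (0:ℝ) ≤ a i0 ^ 2 := sq_nonneg _
  have hB : (0:ℝ) ≤ a i1 ^ 2 := sq_nonneg _
  have hApow : (a i0 ^ 2 : ℝ) ^ (p/2) = t i0 := by
    rw [← Real.rpow_natCast (a i0) 2, ← Real.rpow_mul (ha i0), ht_def]
    push_cast
    rw [show (2:ℝ) * (p/2) = p by ring]
  have hBpow : (a i1 ^ 2 : ℝ) ^ (p/2) = t i1 := by
    rw [← Real.rpow_natCast (a i1) 2, ← Real.rpow_mul (ha i1), ht_def]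
    push_cast
    rw [show (2:ℝ) * (p/2) = p by ring]
  have key2 : ((a i0 ^ 2 + a i1 ^ 2) / 2) ^ (p/2) ≤ s := by
    have h := Real.rpow_arith_mean_le_arith_mean_rpow Finset.univ ![1/2, 1/2] ![a i0 ^ 2, a i1 ^ 2]
      (fun i _ => by fin_cases i <;> norm_num)
      (by simp [Fin.sum_univ_two]; norm_num)
      (fun i _ => by fin_cases i <;> simp [hA, hB]) hq
    simp only [Fin.sum_univ_two, Matrix.cons_val_zero, Matrix.cons_val_one, Matrix.head_cons] at h
    rw [hApow, hBpow] at h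
    have e : (a i0 ^ 2 + a i1 ^ 2) / 2 = 1/2 * a i0 ^ 2 + 1/2 * a i1 ^ 2 := by ring
    rw [e, hs_def]
    linarith
  have hpm : ((a i0 ^ 2 + a i1 ^ 2) / 2) ^ p ≤ s ^ 2 := by
    have hbase : (0:ℝ) ≤ (a i0 ^ 2 + a i1 ^ 2) / 2 := by positivity
    have e : ((a i0 ^ 2 + a i1 ^ 2) / 2) ^ p = (((a i0 ^ 2 + a i1 ^ 2) / 2) ^ (p/2)) ^ (2:ℕ) := by
      rw [← Real.rpow_natCast (((a i0 ^ 2 + a i1 ^ 2) / 2) ^ (p/2)) 2,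
        ← Real.rpow_mul hbase]
      norm_num
    rw [e]
    exact pow_le_pow_left₀ (Real.rpow_nonneg hbase _) key2 2
  -- combine
  set F := Finset.univ.filter (fun i : Fin k => 2 ≤ (i : ℕ)) with hF
  set L := (∏ i ∈ F, a i) * ((a i0 ^ 2 + a i1 ^ 2) / 2) with hL
  have hprodF0 : 0 ≤ ∏ i ∈ F, a i := Finset.prod_nonneg (fun i _ => ha i)
  have hbase : (0:ℝ) ≤ (a i0 ^ 2 + a i1 ^ 2) / 2 := by positivity
  have hL0 : 0 ≤ L := mul_nonneg hprodF0 hbase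
  have hLp : L ^ p ≤ (1 / (k:ℝ)) ^ k := by
    have e1 : L ^ p = (∏ i ∈ F, t i) * ((a i0 ^ 2 + a i1 ^ 2) / 2) ^ p := by
      rw [hL, Real.mul_rpow hprodF0 hbase, ← Real.finset_prod_rpow F a (fun i _ => ha i) p]
    rw [e1]
    calc (∏ i ∈ F, t i) * ((a i0 ^ 2 + a i1 ^ 2) / 2) ^ p
        ≤ (∏ i ∈ F, t i) * s ^ 2 :=
          mul_le_mul_of_nonneg_left hpm (Finset.prod_nonneg (fun i _ => ht i))
      _ = ∏ i, u i := hprod_u.symm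
      _ ≤ (1 / (k:ℝ)) ^ k := hamgm
  have h2k : ((1:ℝ) / k) ^ k ≤ (2:ℝ) ^ (-((k:ℝ) - 2)) := by
    have hnat : (2:ℕ) ^ (k - 2) ≤ k ^ k :=
      le_trans (Nat.pow_le_pow_right (by norm_num) (Nat.sub_le k 2))
        (Nat.pow_le_pow_left hk k)
    have hcast : ((k:ℝ) - 2) = ((k - 2 : ℕ) : ℝ) := by
      rw [Nat.cast_sub hk]; norm_num
    rw [hcast, Real.rpow_neg (by norm_num : (0:ℝ) ≤ 2), Real.rpow_natCast]
    rw [one_div, inv_pow]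
    have hcast2 : ((2:ℝ)) ^ (k - 2 : ℕ) ≤ (k:ℝ) ^ k := by exact_mod_cast hnat
    exact inv_anti₀ (by positivity) hcast2
  have hfin : L ≤ (2:ℝ) ^ (-((k:ℝ) - 2) / p) := by
    have h1 : L = (L ^ p) ^ (1/p) := by
      rw [← Real.rpow_mul hL0, mul_one_div, div_self (ne_of_gt hp0), Real.rpow_one]
    rw [h1]
    calc (L ^ p) ^ (1/p) ≤ ((2:ℝ) ^ (-((k:ℝ) - 2))) ^ (1/p) :=
          Real.rpow_le_rpow (Real.rpow_nonneg hL0 p) (le_trans hLp h2k) (by positivity)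
      _ = (2:ℝ) ^ (-((k:ℝ) - 2) * (1/p)) := by
          rw [← Real.rpow_mul (by norm_num : (0:ℝ) ≤ 2)]
      _ = (2:ℝ) ^ (-((k:ℝ) - 2) / p) := by rw [mul_one_div]
  exact hfin


lemma key_bound (k : ℕ) (hk : 2 ≤ k) (p : ℝ) (hp2 : 2 ≤ p) (c : ℝ) (hc : 0 ≤ c)
    (z : Fin k → ℂ) (hz : (∑ i, ‖z i‖ ^ p) ≤ 1) :
    ‖(∏ i ∈ Finset.univ.filter (fun i : Fin k => 2 ≤ (i : ℕ)), z i) *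
        ((z ⟨0, by omega⟩) ^ 2 - (z ⟨1, by omega⟩) ^ 2 +
          (c : ℂ) * z ⟨0, by omega⟩ * z ⟨1, by omega⟩)‖ ≤
      (2 : ℝ) ^ (-((k : ℝ) - 2) / p) * Real.sqrt (4 + c ^ 2) := by
  rw [norm_mul, norm_prod]
  have hq := quad_bound c (z ⟨0, by omega⟩) (z ⟨1, by omega⟩)
  have hcore := core k hk p hp2 (fun i => ‖z i‖) (fun i => norm_nonneg _) hz
  have hprod0 : 0 ≤ ∏ i ∈ Finset.univ.filter (fun i : Fin k => 2 ≤ (i : ℕ)), ‖z i‖ :=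
    Finset.prod_nonneg (fun i _ => norm_nonneg _)
  calc (∏ i ∈ Finset.univ.filter (fun i : Fin k => 2 ≤ (i : ℕ)), ‖z i‖) *
        ‖(z ⟨0, by omega⟩) ^ 2 - (z ⟨1, by omega⟩) ^ 2 +
          (c : ℂ) * z ⟨0, by omega⟩ * z ⟨1, by omega⟩‖
      ≤ (∏ i ∈ Finset.univ.filter (fun i : Fin k => 2 ≤ (i : ℕ)), ‖z i‖) *
          (Real.sqrt (4 + c ^ 2) * ((‖z ⟨0, by omega⟩‖ ^ 2 + ‖z ⟨1, by omega⟩‖ ^ 2) / 2)) :=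
        mul_le_mul_of_nonneg_left hq hprod0
    _ = ((∏ i ∈ Finset.univ.filter (fun i : Fin k => 2 ≤ (i : ℕ)), ‖z i‖) *
          ((‖z ⟨0, by omega⟩‖ ^ 2 + ‖z ⟨1, by omega⟩‖ ^ 2) / 2)) * Real.sqrt (4 + c ^ 2) := by
        ring
    _ ≤ (2 : ℝ) ^ (-((k : ℝ) - 2) / p) * Real.sqrt (4 + c ^ 2) :=
        mul_le_mul_of_nonneg_right hcore (Real.sqrt_nonneg _)

theorem stmt_18 (m : ℕ) (hm : 3 ≤ m) (hmo : Odd m) (p : ℝ) (hp : 2 * (m : ℝ) ≤ p)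
    (c : ℝ) (hc : 0 ≤ c) :
    sSup {y : ℝ | ∃ z : Fin m → ℂ, (∑ i, ‖z i‖ ^ p) ≤ 1 ∧
        y = ‖(∏ i ∈ Finset.univ.filter (fun i : Fin m => 2 ≤ (i : ℕ)), z i) *
              ((z ⟨0, by omega⟩) ^ 2 - (z ⟨1, by omega⟩) ^ 2 +
                (c : ℂ) * z ⟨0, by omega⟩ * z ⟨1, by omega⟩)‖} ≤
    sSup {y : ℝ | ∃ z : Fin (m - 1) → ℂ, (∑ i, ‖z i‖ ^ p) ≤ 1 ∧
        y = ‖(∏ i ∈ Finset.univ.filter (fun i : Fin (m - 1) => 2 ≤ (i : ℕ)), z i) *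
              ((z ⟨0, by omega⟩) ^ 2 - (z ⟨1, by omega⟩) ^ 2 +
                (c : ℂ) * z ⟨0, by omega⟩ * z ⟨1, by omega⟩)‖} ∧
    sSup {y : ℝ | ∃ z : Fin (m - 1) → ℂ, (∑ i, ‖z i‖ ^ p) ≤ 1 ∧
        y = ‖(∏ i ∈ Finset.univ.filter (fun i : Fin (m - 1) => 2 ≤ (i : ℕ)), z i) *
              ((z ⟨0, by omega⟩) ^ 2 - (z ⟨1, by omega⟩) ^ 2 +
                (c : ℂ) * z ⟨0, by omega⟩ * z ⟨1, by omega⟩)‖} ≤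
      (2 : ℝ) ^ (-((m : ℝ) - 3) / p) * Real.sqrt (4 + c ^ 2) := by
  have hp2 : (2 : ℝ) ≤ p := by
    have : (3 : ℝ) ≤ (m : ℝ) := by exact_mod_cast hm
    linarith
  have hp0 : 0 < p := by linarith
  have hk : 2 ≤ m - 1 := by omega
  have hcast : ((m - 1 : ℕ) : ℝ) - 2 = (m : ℝ) - 3 := by
    rw [Nat.cast_sub (by omega : 1 ≤ m)]; ring
  set C : ℝ := (2 : ℝ) ^ (-((m : ℝ) - 3) / p) * Real.sqrt (4 + c ^ 2) with hC
  have hC0 : 0 ≤ C := mul_nonneg (Real.rpow_nonneg (by norm_num) _) (Real.sqrt_nonneg _)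
  -- every element of the (m-1)-set is bounded by C
  have hBnd : ∀ y ∈ {y : ℝ | ∃ z : Fin (m - 1) → ℂ, (∑ i, ‖z i‖ ^ p) ≤ 1 ∧
      y = ‖(∏ i ∈ Finset.univ.filter (fun i : Fin (m - 1) => 2 ≤ (i : ℕ)), z i) *
            ((z ⟨0, by omega⟩) ^ 2 - (z ⟨1, by omega⟩) ^ 2 +
              (c : ℂ) * z ⟨0, by omega⟩ * z ⟨1, by omega⟩)‖}, y ≤ C := by
    rintro y ⟨z, hz1, rfl⟩
    have h := key_bound (m - 1) hk p hp2 c hc z hz1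
    rwa [hcast] at h
  have hBdd : BddAbove {y : ℝ | ∃ z : Fin (m - 1) → ℂ, (∑ i, ‖z i‖ ^ p) ≤ 1 ∧
      y = ‖(∏ i ∈ Finset.univ.filter (fun i : Fin (m - 1) => 2 ≤ (i : ℕ)), z i) *
            ((z ⟨0, by omega⟩) ^ 2 - (z ⟨1, by omega⟩) ^ 2 +
              (c : ℂ) * z ⟨0, by omega⟩ * z ⟨1, by omega⟩)‖} := ⟨C, hBnd⟩
  have hzero : (0 : ℝ) ∈ {y : ℝ | ∃ z : Fin (m - 1) → ℂ, (∑ i, ‖z i‖ ^ p) ≤ 1 ∧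
      y = ‖(∏ i ∈ Finset.univ.filter (fun i : Fin (m - 1) => 2 ≤ (i : ℕ)), z i) *
            ((z ⟨0, by omega⟩) ^ 2 - (z ⟨1, by omega⟩) ^ 2 +
              (c : ℂ) * z ⟨0, by omega⟩ * z ⟨1, by omega⟩)‖} := by
    refine ⟨0, ?_, ?_⟩
    · simp [Real.zero_rpow (ne_of_gt hp0)]
    · simp
  refine ⟨?_, Real.sSup_le hBnd hC0⟩
  -- first inequality
  refine Real.sSup_le ?_ (le_csSup hBdd hzero)
  rintro y ⟨z, hz1, rfl⟩
  have hle : m - 1 ≤ m := by omega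
  set w : Fin (m - 1) → ℂ := fun i => z (Fin.castLE hle i) with hw
  -- each coordinate has norm at most 1
  have hone : ∀ i, ‖z i‖ ≤ 1 := by
    intro i
    have h1 : ‖z i‖ ^ p ≤ 1 := by
      refine le_trans ?_ hz1
      exact Finset.single_le_sum (fun j _ => Real.rpow_nonneg (norm_nonneg _) p)
        (Finset.mem_univ i)
    by_contra hgt
    push_neg at hgt
    have : 1 < ‖z i‖ ^ p := Real.one_lt_rpow_iff_of_pos (by linarith) |>.mpr (Or.inl ⟨hgt, hp0⟩)
    linarith
  -- sum bound for w
  have hwsum : (∑ i, ‖w i‖ ^ p) ≤ 1 := by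
    refine le_trans ?_ hz1
    have hmap : ∑ i : Fin (m - 1), ‖w i‖ ^ p
        = ∑ j ∈ Finset.univ.map (Fin.castLEEmb hle), ‖z j‖ ^ p := by
      rw [Finset.sum_map]
      rfl
    rw [hmap]
    exact Finset.sum_le_sum_of_subset_of_nonneg (Finset.subset_univ _)
      (fun j _ _ => Real.rpow_nonneg (norm_nonneg _) p)
  -- the image of the (m-1) filter inside the m filter
  set S : Finset (Fin m) := (Finset.univ.filter (fun i : Fin (m - 1) => 2 ≤ (i : ℕ))).map
      (Fin.castLEEmb hle) with hS
  have hSsub : S ⊆ Finset.univ.filter (fun i : Fin m => 2 ≤ (i : ℕ)) := by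
    intro j hj
    simp only [hS, Finset.mem_map, Finset.mem_filter, Finset.mem_univ, true_and] at hj ⊢
    obtain ⟨i, hi, rfl⟩ := hj
    exact hi
  have hprodle : ∏ i ∈ Finset.univ.filter (fun i : Fin m => 2 ≤ (i : ℕ)), ‖z i‖
      ≤ ∏ i ∈ Finset.univ.filter (fun i : Fin (m - 1) => 2 ≤ (i : ℕ)), ‖w i‖ := by
    have hprodS : ∏ i ∈ S, ‖z i‖
        = ∏ i ∈ Finset.univ.filter (fun i : Fin (m - 1) => 2 ≤ (i : ℕ)), ‖w i‖ := by
      rw [hS, Finset.prod_map]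
      rfl
    rw [← hprodS, ← Finset.prod_sdiff hSsub]
    have h1 : ∏ i ∈ (Finset.univ.filter (fun i : Fin m => 2 ≤ (i : ℕ))) \ S, ‖z i‖ ≤ 1 :=
      Finset.prod_le_one (fun i _ => norm_nonneg _) (fun i _ => hone i)
    have h2 : 0 ≤ ∏ i ∈ S, ‖z i‖ := Finset.prod_nonneg (fun i _ => norm_nonneg _)
    nlinarith
  -- quad factors agree
  have hq0 : w ⟨0, by omega⟩ = z ⟨0, by omega⟩ := rfl
  have hq1 : w ⟨1, by omega⟩ = z ⟨1, by omega⟩ := rfl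
  have hyle : ‖(∏ i ∈ Finset.univ.filter (fun i : Fin m => 2 ≤ (i : ℕ)), z i) *
        ((z ⟨0, by omega⟩) ^ 2 - (z ⟨1, by omega⟩) ^ 2 +
          (c : ℂ) * z ⟨0, by omega⟩ * z ⟨1, by omega⟩)‖
      ≤ ‖(∏ i ∈ Finset.univ.filter (fun i : Fin (m - 1) => 2 ≤ (i : ℕ)), w i) *
        ((w ⟨0, by omega⟩) ^ 2 - (w ⟨1, by omega⟩) ^ 2 +
          (c : ℂ) * w ⟨0, by omega⟩ * w ⟨1, by omega⟩)‖ := by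
    rw [norm_mul, norm_mul, norm_prod, norm_prod, hq0, hq1]
    exact mul_le_mul_of_nonneg_right hprodle (norm_nonneg _)
  exact le_trans hyle (le_csSup hBdd ⟨w, hwsum, rfl⟩)
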